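/- For z in the open unit disc, the coefficients a_k^n defined by a_k^n = (1/k)(1-|z|^{2k}) z^{n-k} for 1 ≤ k ≤ n and a_k^n = (1/k) z̄^{k-n}(1-|z|^{2n}) for k ≥ n satisfy the generating identity tⁿ - zⁿ = Σ_{k≥1} (k a_k^n/(1-|z|²)) t^{k-1}(t-z)(1-z̄t) as formal power series in t. -/

import Mathlib

/-- The coefficients `a_k^n`: `a_k^n = (1/k)(1-|z|^{2k}) z^{n-k}` for `1 ≤ k ≤ n` and
`a_k^n = (1/k) z̄^{k-n} (1-|z|^{2n})` for `k ≥ n` (with `a_0^n = 0`); note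
`|z|^{2j} = (z z̄)^j`. -/
noncomputable def acoef (z : ℂ) (n k : ℕ) : ℂ :=
  if k = 0 then 0
  else if k ≤ n then (1 - (z * (starRingEnd ℂ) z) ^ k) * z ^ (n - k) / k
  else ((starRingEnd ℂ) z) ^ (k - n) * (1 - (z * (starRingEnd ℂ) z) ^ n) / k

/-- the generating identity
`tⁿ - zⁿ = Σ_{k≥1} (k a_k^n / (1-|z|²)) t^{k-1} (t-z)(1-z̄t)`, as an identity of
(coefficientwise convergent) power series on the open unit disc. -/
theorem stmt14 (z : ℂ) (hz : ‖z‖ < 1) (n : ℕ) (hn : 1 ≤ n) :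
    ∀ t : ℂ, ‖t‖ < 1 →
      t ^ n - z ^ n
        = ∑' k : ℕ, (k : ℂ) * acoef z n k / (1 - z * (starRingEnd ℂ) z)
            * t ^ (k - 1) * (t - z) * (1 - (starRingEnd ℂ) z * t) := by
  intro t ht
  set w := (starRingEnd ℂ) z with hw
  have hwz : ‖w‖ = ‖z‖ := by rw [hw]; exact RCLike.norm_conj z
  have hzw : ‖z * w‖ < 1 := by
    rw [norm_mul, hwz]; nlinarith [norm_nonneg z]
  have hwt : ‖w * t‖ < 1 := by
    rw [norm_mul, hwz]; nlinarith [norm_nonneg z, norm_nonneg t]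
  have hne : (1 : ℂ) - z * w ≠ 0 := by
    intro h
    have : z * w = 1 := by linear_combination -h
    rw [this] at hzw; simp at hzw
  have hwt1 : (1 : ℂ) - w * t ≠ 0 := by
    intro h
    have : w * t = 1 := by linear_combination -h
    rw [this] at hwt; simp at hwt
  set f := fun k : ℕ => (k : ℂ) * acoef z n k / (1 - z * w)
      * t ^ (k - 1) * (t - z) * (1 - w * t) with hf
  set h := fun (i k : ℕ) => if i + 1 ≤ k then
      z ^ (n - 1 - i) * w ^ (k - 1 - i) * t ^ (k - 1) * (t - z) * (1 - w * t) else 0 with hh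
  have key : ∀ k, f k = ∑ i ∈ Finset.range n, h i k := by
    intro k
    rcases Nat.eq_zero_or_pos k with hk0 | hk1
    · subst hk0
      simp [hf, hh]
    have hkC : (k : ℂ) ≠ 0 := Nat.cast_ne_zero.mpr hk1.ne'
    rcases le_or_gt k n with hkn | hkn
    · -- 1 ≤ k ≤ n
      have hac : acoef z n k = (1 - (z * w) ^ k) * z ^ (n - k) / k := by
        rw [acoef, if_neg hk1.ne', if_pos hkn]
      have hgeo : (1 - z * w) * (∑ j ∈ Finset.range k, (z * w) ^ j) = 1 - (z * w) ^ k := by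
        have := geom_sum_mul (z * w) k
        linear_combination -this
      have h1 : (k : ℂ) * ((1 - (z * w) ^ k) * z ^ (n - k) / k)
          = (1 - (z * w) ^ k) * z ^ (n - k) := by field_simp
      have hLHS : f k = (∑ j ∈ Finset.range k, (z * w) ^ j) * z ^ (n - k)
          * t ^ (k - 1) * (t - z) * (1 - w * t) := by
        simp only [hf]
        rw [hac, h1, ← hgeo]
        field_simp
      have hRHS : ∑ i ∈ Finset.range n, h i k
          = ∑ i ∈ Finset.range k, z ^ (n - 1 - i) * w ^ (k - 1 - i) * t ^ (k - 1) * (t - z) * (1 - w * t) := by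
        rw [← Finset.sum_range_add_sum_Ico _ hkn]
        have h2 : ∑ i ∈ Finset.Ico k n, h i k = 0 := by
          apply Finset.sum_eq_zero
          intro i hi
          simp only [Finset.mem_Ico] at hi
          simp only [hh]
          rw [if_neg (by omega)]
        rw [h2, add_zero]
        apply Finset.sum_congr rfl
        intro i hi
        simp only [Finset.mem_range] at hi
        simp only [hh]
        rw [if_pos (by omega)]
      rw [hLHS, hRHS]
      rw [Finset.sum_mul, Finset.sum_mul, Finset.sum_mul, Finset.sum_mul]
      conv_rhs => rw [← Finset.sum_range_reflect]
      apply Finset.sum_congr rfl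
      intro j hj
      simp only [Finset.mem_range] at hj
      have e1 : n - 1 - (k - 1 - j) = n - k + j := by omega
      have e2 : k - 1 - (k - 1 - j) = j := by omega
      rw [e1, e2, pow_add, mul_pow]
      ring
    · -- k > n
      have hac : acoef z n k = w ^ (k - n) * (1 - (z * w) ^ n) / k := by
        rw [acoef, if_neg hk1.ne', if_neg (by omega)]
      have hgeo : (1 - z * w) * (∑ j ∈ Finset.range n, (z * w) ^ j) = 1 - (z * w) ^ n := by
        have := geom_sum_mul (z * w) n
        linear_combination -this
      have h1 : (k : ℂ) * (w ^ (k - n) * (1 - (z * w) ^ n) / k)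
          = w ^ (k - n) * (1 - (z * w) ^ n) := by field_simp
      have hLHS : f k = w ^ (k - n) * (∑ j ∈ Finset.range n, (z * w) ^ j)
          * t ^ (k - 1) * (t - z) * (1 - w * t) := by
        simp only [hf]
        rw [hac, h1, ← hgeo]
        field_simp
      have hRHS : ∑ i ∈ Finset.range n, h i k
          = ∑ i ∈ Finset.range n, z ^ (n - 1 - i) * w ^ (k - 1 - i) * t ^ (k - 1) * (t - z) * (1 - w * t) := by
        apply Finset.sum_congr rfl
        intro i hi
        simp only [Finset.mem_range] at hi
        simp only [hh]
        rw [if_pos (by omega)]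
      rw [hLHS, hRHS]
      rw [Finset.mul_sum, Finset.sum_mul, Finset.sum_mul, Finset.sum_mul]
      conv_rhs => rw [← Finset.sum_range_reflect]
      apply Finset.sum_congr rfl
      intro j hj
      simp only [Finset.mem_range] at hj
      have e1 : n - 1 - (n - 1 - j) = j := by omega
      have e2 : k - 1 - (n - 1 - j) = k - n + j := by omega
      rw [e1, e2, pow_add, mul_pow]
      ring
  have hsum : ∀ i ∈ Finset.range n, HasSum (h i) (z ^ (n - 1 - i) * t ^ i * (t - z)) := by
    intro i hi
    have base : HasSum (fun m : ℕ => (w * t) ^ m) (1 - w * t)⁻¹ :=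
      hasSum_geometric_of_norm_lt_one hwt
    have base2 := base.mul_left (z ^ (n - 1 - i) * t ^ i * (t - z) * (1 - w * t))
    have hshift : (fun m : ℕ => h i (m + (i + 1)))
        = fun m : ℕ => z ^ (n - 1 - i) * t ^ i * (t - z) * (1 - w * t) * (w * t) ^ m := by
      funext m
      simp only [hh]
      rw [if_pos (by omega)]
      have e1 : m + (i + 1) - 1 - i = m := by omega
      have e2 : m + (i + 1) - 1 = m + i := by omega
      rw [e1, e2, pow_add, mul_pow]
      ring
    have hval : z ^ (n - 1 - i) * t ^ i * (t - z) * (1 - w * t) * (1 - w * t)⁻¹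
        = z ^ (n - 1 - i) * t ^ i * (t - z) := by
      field_simp
      exact mul_div_cancel_right₀ _ (by rwa [mul_comm] at hwt1)
    rw [← hval]
    have hmain := (hasSum_nat_add_iff (f := h i) (i + 1)).mp (by rw [hshift]; exact base2)
    have hz0 : ∑ k ∈ Finset.range (i + 1), h i k = 0 := by
      apply Finset.sum_eq_zero
      intro k hk
      simp only [Finset.mem_range] at hk
      simp only [hh]
      rw [if_neg (by omega)]
    rwa [hz0, add_zero] at hmain
  have hF : HasSum f (∑ i ∈ Finset.range n, z ^ (n - 1 - i) * t ^ i * (t - z)) := by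
    have := hasSum_sum hsum
    rwa [show (fun k => ∑ i ∈ Finset.range n, h i k) = f by funext k; rw [key]] at this
  rw [hF.tsum_eq]
  have hgs : ∑ i ∈ Finset.range n, z ^ (n - 1 - i) * t ^ i * (t - z)
      = (∑ i ∈ Finset.range n, t ^ i * z ^ (n - 1 - i)) * (t - z) := by
    rw [Finset.sum_mul]; apply Finset.sum_congr rfl; intros; ring
  rw [hgs, geom_sum₂_mul]
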